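/- Fix an integer n ≥ 1 and an integer r ≥ 2, and let A, B, C be pairwise distinct elements of F_r(n). Then the sequence (γ(A,B), γ(A,C), γ(B,C)) is monotone with respect to the order <_{r-1} on F_{r-1}(n): it is either nondecreasing or nonincreasing. -/

import Mathlib

open scoped Classical

/-- The carrier type of the set `F_r(n)`: `F_1(n) ⊆ Bool` (with `false = -` and
`true = +`), `F_2(n) ⊆ ℕ × ℕ`, and `F_r(n)` consists of finite sets of elements of
`F_{r-1}(n)` for `r ≥ 3`. -/
def FT : ℕ → Type
  | 0 => Bool
  | 1 => Bool
  | 2 => ℕ × ℕ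
  | (r + 3) => Finset (FT (r + 2))

/-- Decidable equality for `FT r`. -/
def FTdecEq : (r : ℕ) → DecidableEq (FT r)
  | 0 => inferInstanceAs (DecidableEq Bool)
  | 1 => inferInstanceAs (DecidableEq Bool)
  | 2 => inferInstanceAs (DecidableEq (ℕ × ℕ))
  | (r + 3) => letI := FTdecEq (r + 2); inferInstanceAs (DecidableEq (Finset (FT (r + 2))))

attribute [instance] FTdecEq

/-- `FT r` is inhabited. -/
def FTinhab : (r : ℕ) → Inhabited (FT r)
  | 0 => ⟨false⟩
  | 1 => ⟨false⟩
  | 2 => ⟨(0, 0)⟩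
  | (r + 3) => letI := FTdecEq (r + 2); ⟨(∅ : Finset (FT (r + 2)))⟩

attribute [instance] FTinhab

/-- The data attached to level `r` of the construction: membership in `F_r(n)`, in
`F_r^-(n)` and in `F_r^+(n)`, the map `σ_r` and the relation `<_r`. -/
structure LevelData (α : Type) where
  mem : α → Prop
  memMinus : α → Prop
  memPlus : α → Prop
  sigma : α → α
  lt : α → α → Prop

/-- The canonical representative of the `≡_r`-class of `a`: `a` itself if `a ∈ F_r^-(n)`
and `σ_r(a)` otherwise (identifying each `A ∈ F_r^-(n)` with `σ_r(A)`). -/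
noncomputable def LevelData.rep {α : Type} (D : LevelData α) (a : α) : α :=
  if D.memMinus a then a else D.sigma a

/-- The equivalence `≡_r`: `a ≡ b` iff `a = b`, `a = σ(b)` or `b = σ(a)`. -/
def LevelData.eqv {α : Type} (D : LevelData α) (a b : α) : Prop :=
  a = b ∨ a = D.sigma b ∨ b = D.sigma a

/-- The strict order `≺_r` on `≡_r`-equivalence classes (as a relation on elements):
identifying each `A ∈ F_r^-(n)` with `σ_r(A)`, the class of `a` strictly precedes the
class of `b` iff the representatives are distinct and `rep a <_r rep b`. -/
noncomputable def LevelData.prec {α : Type} (D : LevelData α) (a b : α) : Prop :=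
  D.rep a ≠ D.rep b ∧ D.lt (D.rep a) (D.rep b)

/-- `γ(A,B)` for `r ≥ 3`: the element of `B` lying in the `≺_{r-1}`-first equivalence
class on which `A` and `B` differ. (For transversals `A ≠ B` this is the unique element
`b ∈ B ∖ A` whose class weakly precedes the class of every element of `B ∖ A`.) -/
noncomputable def gammaOf {α : Type} [DecidableEq α] [Nonempty α] (D : LevelData α)
    (A B : Finset α) : α :=
  Classical.epsilon (fun b => b ∈ B \ A ∧ ∀ b' ∈ B \ A, b' = b ∨ D.prec b b')

/-- The construction of level `r` data from level `r-1` data (for `r ≥ 3`):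
`F_r(n)` consists of the sets containing exactly one element from each
`≡_{r-1}`-equivalence class; `F_r^-(n)` (resp. `F_r^+(n)`) consists of those members
containing the `<_{r-1}`-minimum (resp. maximum) of `F_{r-1}(n)`;
`σ_r(X) = {σ_{r-1}(A) : A ∈ X}`; and `A <_r B` iff `γ(A,B) ∈ F_{r-1}^+(n)`. -/
noncomputable def levelSucc {α : Type} [DecidableEq α] [Nonempty α] (D : LevelData α) :
    LevelData (Finset α) where
  mem X := (∀ a ∈ X, D.mem a) ∧ ∀ a, D.mem a → (a ∈ X ↔ D.sigma a ∉ X)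
  memMinus X :=
    Classical.epsilon (fun M => D.mem M ∧ ∀ B, D.mem B → B ≠ M → D.lt M B) ∈ X
  memPlus X :=
    Classical.epsilon (fun M => D.mem M ∧ ∀ B, D.mem B → B ≠ M → D.lt B M) ∈ X
  sigma X := X.image D.sigma
  lt A B := D.memPlus (gammaOf D A B)

/-- Level 1: `F_1(n) = {-,+}` with `- = false` and `+ = true`, `σ_1(-) = +`, and
`- <_1 +`. -/
noncomputable def level1 : LevelData (FT 1) where
  mem _ := True
  memMinus b := b = false
  memPlus b := b = true
  sigma b := Bool.not b
  lt a b := a = false ∧ b = true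

/-- Level 2: `F_2^-(n) = {(2n-i+1, i) : 1 ≤ i ≤ n}`, `F_2^+(n) = {(i, 2n-i+1) : 1 ≤ i ≤ n}`,
`σ_2` swaps the coordinates, and `(a₁,a₂) <_2 (b₁,b₂)` iff `a₁ > b₁`. -/
noncomputable def level2 (n : ℕ) : LevelData (FT 2) where
  mem p := ∃ i : ℕ, 1 ≤ i ∧ i ≤ n ∧ (p = (2 * n - i + 1, i) ∨ p = (i, 2 * n - i + 1))
  memMinus p := ∃ i : ℕ, 1 ≤ i ∧ i ≤ n ∧ p = (2 * n - i + 1, i)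
  memPlus p := ∃ i : ℕ, 1 ≤ i ∧ i ≤ n ∧ p = (i, 2 * n - i + 1)
  sigma p := (p.2, p.1)
  lt p q := q.1 < p.1

/-- The level data of the construction, for every level `r` (levels `0` and `1` both
carry the level-1 data). -/
noncomputable def L (n : ℕ) : (r : ℕ) → LevelData (FT r)
  | 0 => level1
  | 1 => level1
  | 2 => level2 n
  | (r + 3) => levelSucc (L n (r + 2))

/-- The map `γ : F_{k+2}(n) × F_{k+2}(n) → F_{k+1}(n)` (so `γ` at level `r = k + 2`).
For `r = 2`, `γ(A,B) = -` iff `A.1 < B.1`; for `r ≥ 3`, `γ(A,B)` is the element of `B`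
in the `≺_{r-1}`-first equivalence class on which `A` and `B` differ. -/
noncomputable def gam (n : ℕ) : (k : ℕ) → FT (k + 2) → FT (k + 2) → FT (k + 1)
  | 0, p, q => decide (q.1 < p.1)
  | (k + 1), A, B => gammaOf (L n (k + 2)) A B

/-- Membership in `F_r(n)`. -/
noncomputable def memF (n r : ℕ) : FT r → Prop := (L n r).mem

/-- The (non-strict) relation `≤_r`: `A <_r B` or `A = B`. -/
noncomputable def leF (n r : ℕ) (a b : FT r) : Prop := (L n r).lt a b ∨ a = b

/-- `Γ(B₁,…,B_k) = (γ(B₁,B₂),…,γ(B_{k-1},B_k))`, mapping sequences over `F_{k+2}(n)` to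
sequences over `F_{k+1}(n)`. -/
noncomputable def Gam (n k : ℕ) (l : List (FT (k + 2))) : List (FT (k + 1)) :=
  List.zipWith (gam n k) l l.tail

/-- `Γ^i`, iterated `i` times from level `b + i + 1` down to level `b + 1`. -/
noncomputable def GamIter (n : ℕ) :
    (i b : ℕ) → List (FT (b + i + 1)) → List (FT (b + 1))
  | 0, _, l => l
  | (i + 1), b, l => GamIter n i b (Gam n (b + i) l)

/-- The full iteration `Γ^{k+1}` from level `k + 2` down to level `1`. -/
noncomputable def GamFull (n : ℕ) : (k : ℕ) → List (FT (k + 2)) → List (FT 1)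
  | 0, l => Gam n 0 l
  | (k + 1), l => GamFull n k (Gam n (k + 1) l)

section Machinery

variable {α : Type} [DecidableEq α] [Nonempty α]

/-- The package of order-theoretic properties of a level. -/
structure GoodLD (D : LevelData α) : Prop where
  memsig : ∀ a, D.mem a → D.mem (D.sigma a)
  sigsig : ∀ a, D.mem a → D.sigma (D.sigma a) = a
  signe : ∀ a, D.mem a → D.sigma a ≠ a
  tri : ∀ a b, D.mem a → D.mem b → a ≠ b → D.lt a b ∨ D.lt b a
  asym : ∀ a b, D.mem a → D.mem b → a ≠ b → D.lt a b → ¬ D.lt b a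
  ltTrans : ∀ a b c, D.mem a → D.mem b → D.mem c → a ≠ c → D.lt a b → D.lt b c → D.lt a c
  anti : ∀ a b, D.mem a → D.mem b → (D.lt a b ↔ D.lt (D.sigma b) (D.sigma a))
  minusIff : ∀ a, D.mem a → (D.memMinus a ↔ D.lt a (D.sigma a))
  plusIff : ∀ a, D.mem a → (D.memPlus a ↔ D.lt (D.sigma a) a)
  minEx : ∃ m, D.mem m ∧ ∀ b, D.mem b → b ≠ m → D.lt m b
  finset : ∃ S : Finset α, ∀ a, a ∈ S ↔ D.mem a

variable {D : LevelData α} (hG : GoodLD D)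

namespace GoodLD

set_option linter.unusedSectionVars false

include hG

theorem minus_sigma (ha : D.mem a) : D.memMinus (D.sigma a) ↔ ¬ D.memMinus a := by
  rw [hG.minusIff _ (hG.memsig _ ha), hG.sigsig _ ha, hG.minusIff _ ha]
  constructor
  · intro h h'; exact hG.asym _ _ ha (hG.memsig _ ha) (Ne.symm (hG.signe _ ha)) h' h
  · intro h
    rcases hG.tri _ _ ha (hG.memsig _ ha) (Ne.symm (hG.signe _ ha)) with h' | h'
    · exact absurd h' h
    · exact h'

theorem plus_iff_minus_sigma (ha : D.mem a) : D.memPlus a ↔ D.memMinus (D.sigma a) := by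
  rw [hG.plusIff _ ha, hG.minusIff _ (hG.memsig _ ha), hG.sigsig _ ha]

theorem minus_or_plus (ha : D.mem a) : D.memMinus a ∨ D.memPlus a := by
  by_cases h : D.memMinus a
  · exact Or.inl h
  · refine Or.inr ?_
    rw [hG.plus_iff_minus_sigma ha, hG.minus_sigma ha]; exact h

theorem not_minus_and_plus (ha : D.mem a) : ¬ (D.memMinus a ∧ D.memPlus a) := by
  rintro ⟨h1, h2⟩
  rw [hG.plus_iff_minus_sigma ha, hG.minus_sigma ha] at h2
  exact h2 h1

theorem rep_minus (ha : D.mem a) : D.memMinus (D.rep a) := by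
  unfold LevelData.rep; split
  · assumption
  · rw [hG.minus_sigma ha]; assumption

theorem mem_rep (ha : D.mem a) : D.mem (D.rep a) := by
  unfold LevelData.rep; split
  · exact ha
  · exact hG.memsig _ ha

theorem rep_or (a : α) : D.rep a = a ∨ D.rep a = D.sigma a := by
  unfold LevelData.rep; split
  · exact Or.inl rfl
  · exact Or.inr rfl

theorem self_or_sigma_rep (ha : D.mem a) : a = D.rep a ∨ a = D.sigma (D.rep a) := by
  rcases hG.rep_or (D := D) a with h | h
  · exact Or.inl h.symm
  · rw [h, hG.sigsig _ ha]; exact Or.inr rfl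

theorem rep_sigma (ha : D.mem a) : D.rep (D.sigma a) = D.rep a := by
  unfold LevelData.rep
  by_cases h : D.memMinus a
  · rw [if_pos h, if_neg (by rw [hG.minus_sigma ha]; exact fun h' => h' h), hG.sigsig _ ha]
  · rw [if_neg h, if_pos (by rw [hG.minus_sigma ha]; exact h)]

theorem rep_cases (hu : D.mem u) (hv : D.mem v) (h : D.rep u = D.rep v) (hne : u ≠ v) :
    v = D.sigma u := by
  rcases hG.self_or_sigma_rep hu with h1 | h1 <;> rcases hG.self_or_sigma_rep hv with h2 | h2
  · exact absurd (h1.trans (h.trans h2.symm)) hne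
  · rw [h2, ← h, ← h1]
  · rw [h2, ← h]
    conv_rhs => rw [h1]
    rw [hG.sigsig _ (hG.mem_rep hu)]
  · exact absurd (h2.trans (by rw [← h, ← h1])) (Ne.symm hne)

theorem prec_total (hu : D.mem u) (hv : D.mem v) (h : D.rep u ≠ D.rep v) :
    D.prec u v ∨ D.prec v u := by
  rcases hG.tri _ _ (hG.mem_rep hu) (hG.mem_rep hv) h with h' | h'
  · exact Or.inl ⟨h, h'⟩
  · exact Or.inr ⟨h.symm, h'⟩

theorem prec_asymm (hu : D.mem u) (hv : D.mem v) (h : D.prec u v) : ¬ D.prec v u :=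
  fun h' => hG.asym _ _ (hG.mem_rep hu) (hG.mem_rep hv) h.1 h.2 h'.2

theorem prec_irrefl (hu : D.mem u) : ¬ D.prec u u := fun h => h.1 rfl

theorem prec_trans (hu : D.mem u) (hv : D.mem v) (hw : D.mem w)
    (h1 : D.prec u v) (h2 : D.prec v w) (h : D.rep u ≠ D.rep w) : D.prec u w :=
  ⟨h, hG.ltTrans _ _ _ (hG.mem_rep hu) (hG.mem_rep hv) (hG.mem_rep hw) h h1.2 h2.2⟩

theorem prec_congr_left (h : D.rep u = D.rep u') : D.prec u v ↔ D.prec u' v := by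
  unfold LevelData.prec; rw [h]

theorem prec_congr_right (h : D.rep v = D.rep v') : D.prec u v ↔ D.prec u v' := by
  unfold LevelData.prec; rw [h]

/-- An element of a strictly later class lies strictly between `u` and `σ u`. -/
theorem between (hu : D.mem u) (hv : D.mem v) (h : D.prec u v) :
    (D.lt u v ∧ D.lt v (D.sigma u)) ∨ (D.lt (D.sigma u) v ∧ D.lt v u) := by
  set m := D.rep u with hm
  set m' := D.rep v with hm'
  have hmm : D.mem m := hG.mem_rep hu
  have hmm' : D.mem m' := hG.mem_rep hv
  have hminm : D.memMinus m := hG.rep_minus hu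
  have hminm' : D.memMinus m' := hG.rep_minus hv
  have h1 : D.lt m (D.sigma m) := (hG.minusIff _ hmm).1 hminm
  have h1' : D.lt m' (D.sigma m') := (hG.minusIff _ hmm').1 hminm'
  have hne : m ≠ m' := h.1
  have hlt : D.lt m m' := h.2
  have hnsig : m ≠ D.sigma m' := by
    intro hh
    rw [hh] at hminm
    exact (hG.minus_sigma hmm').1 hminm hminm'
  have hnsig' : m' ≠ D.sigma m := by
    intro hh
    rw [hh] at hminm'
    exact (hG.minus_sigma hmm).1 hminm' hminm
  -- σ m' < σ m
  have h2 : D.lt (D.sigma m') (D.sigma m) := (hG.anti _ _ hmm hmm').1 hlt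
  -- m' < σ m
  have h3 : D.lt m' (D.sigma m) := by
    rcases hG.tri _ _ hmm' (hG.memsig _ hmm) hnsig' with h' | h'
    · exact h'
    · -- σ m < m' : then σ m' < m, m < m', so σ m' < m', contra m' < σ m'
      exfalso
      have h4 : D.lt (D.sigma m') m := by
        have := (hG.anti _ _ (hG.memsig _ hmm) hmm').1 h'
        rwa [hG.sigsig _ hmm] at this
      have h5 : D.lt (D.sigma m') m' :=
        hG.ltTrans _ _ _ (hG.memsig _ hmm') hmm hmm' (hG.signe _ hmm') h4 hlt
      exact hG.asym _ _ hmm' (hG.memsig _ hmm') (Ne.symm (hG.signe _ hmm')) h1' h5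
  -- m < σ m'
  have h4 : D.lt m (D.sigma m') := by
    refine hG.ltTrans _ _ _ hmm hmm' (hG.memsig _ hmm') hnsig hlt h1'
  -- now v ∈ {m', σ m'}, u ∈ {m, σ m}
  have hv2 : (D.lt m v ∧ D.lt v (D.sigma m)) := by
    rcases hG.self_or_sigma_rep hv with hh | hh
    · rw [hh, ← hm']; exact ⟨hlt, h3⟩
    · rw [hh, ← hm']; exact ⟨h4, h2⟩
  rcases hG.self_or_sigma_rep hu with hh | hh
  · left; rw [hh, ← hm]; exact hv2
  · right
    rw [hh, ← hm, hG.sigsig _ hmm]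
    exact hv2

end GoodLD

end Machinery

section Machinery2

/-- A minimum for a total transitive relation on a nonempty finite set. -/
theorem exists_min_rel {β : Type} [DecidableEq β] (r : β → β → Prop) :
    ∀ (T : Finset β), T.Nonempty →
    (∀ a ∈ T, ∀ b ∈ T, a ≠ b → r a b ∨ r b a) →
    (∀ a ∈ T, ∀ b ∈ T, ∀ c ∈ T, r a b → r b c → r a c) →
    ∃ b ∈ T, ∀ b' ∈ T, b' = b ∨ r b b' := by
  intro T
  induction T using Finset.strongInduction with
  | _ T ih =>
    intro hne htot htrans
    obtain ⟨a, ha⟩ := hne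
    by_cases hTa : T.erase a = ∅
    · refine ⟨a, ha, ?_⟩
      intro b' hb'
      left
      by_contra hne'
      exact (Finset.notMem_empty b') (hTa ▸ Finset.mem_erase.2 ⟨hne', hb'⟩)
    · obtain ⟨b, hb, hmin⟩ := ih (T.erase a) (Finset.erase_ssubset ha)
        (Finset.nonempty_iff_ne_empty.2 hTa)
        (fun x hx y hy => htot x (Finset.mem_of_mem_erase hx) y (Finset.mem_of_mem_erase hy))
        (fun x hx y hy z hz => htrans x (Finset.mem_of_mem_erase hx) y
          (Finset.mem_of_mem_erase hy) z (Finset.mem_of_mem_erase hz))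
      have hbT : b ∈ T := Finset.mem_of_mem_erase hb
      have hab : a ≠ b := fun h => (Finset.mem_erase.1 hb).1 h.symm
      rcases htot a ha b hbT hab with hr | hr
      · refine ⟨a, ha, ?_⟩
        intro b' hb'
        by_cases h' : b' = a
        · exact Or.inl h'
        · rcases hmin b' (Finset.mem_erase.2 ⟨h', hb'⟩) with h'' | h''
          · exact Or.inr (h'' ▸ hr)
          · exact Or.inr (htrans a ha b hbT b' hb' hr h'')
      · refine ⟨b, hbT, ?_⟩
        intro b' hb'
        by_cases h' : b' = a
        · exact Or.inr (h' ▸ hr)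
        · exact hmin b' (Finset.mem_erase.2 ⟨h', hb'⟩)

variable {α : Type} [DecidableEq α] [Nonempty α]

/-- The `<`-minimum of a level (an `Classical.epsilon` matching `levelSucc`). -/
noncomputable def theMin (D : LevelData α) : α :=
  Classical.epsilon (fun M => D.mem M ∧ ∀ B, D.mem B → B ≠ M → D.lt M B)

/-- The `<`-maximum of a level (an `Classical.epsilon` matching `levelSucc`). -/
noncomputable def theMax (D : LevelData α) : α :=
  Classical.epsilon (fun M => D.mem M ∧ ∀ B, D.mem B → B ≠ M → D.lt B M)

variable {D : LevelData α} (hG : GoodLD D)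

namespace GoodLD

set_option linter.unusedSectionVars false

include hG

theorem transv_sigma_not_mem {X : Finset α} (hX : (levelSucc D).mem X) (ha : D.mem a)
    (h : a ∈ X) : D.sigma a ∉ X := (hX.2 a ha).1 h

theorem transv_sigma_mem {X : Finset α} (hX : (levelSucc D).mem X) (ha : D.mem a)
    (h : a ∉ X) : D.sigma a ∈ X := by
  by_contra h'
  exact h ((hX.2 a ha).2 h')

theorem transv_rep_ne {X : Finset α} (hX : (levelSucc D).mem X) (hb : b ∈ X) (hb' : b' ∈ X)
    (hne : b ≠ b') : D.rep b ≠ D.rep b' := by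
  intro h
  have h2 := hG.rep_cases (hX.1 b hb) (hX.1 b' hb') h hne
  exact hG.transv_sigma_not_mem hX (hX.1 b hb) hb (h2 ▸ hb')

theorem gamma_exists {X Y : Finset α} (hX : (levelSucc D).mem X) (hY : (levelSucc D).mem Y)
    (hXY : X ≠ Y) :
    ∃ b, b ∈ Y \ X ∧ ∀ b' ∈ Y \ X, b' = b ∨ D.prec b b' := by
  have hne : (Y \ X).Nonempty := by
    have hex : ∃ a, a ∈ Y ∧ a ∉ X := by
      by_contra h
      push_neg at h
      apply hXY
      apply Finset.ext
      intro a
      constructor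
      · intro haX
        by_contra haY
        have h1 : D.sigma a ∈ Y := hG.transv_sigma_mem hY (hX.1 a haX) haY
        have h2 : D.sigma a ∈ X := h _ h1
        exact hG.transv_sigma_not_mem hX (hX.1 a haX) haX h2
      · intro haY; exact h a haY
    obtain ⟨a, h1, h2⟩ := hex
    exact ⟨a, Finset.mem_sdiff.2 ⟨h1, h2⟩⟩
  have hmem : ∀ x ∈ Y \ X, D.mem x := fun x hx => hY.1 x (Finset.mem_sdiff.1 hx).1
  obtain ⟨b, hb, hmin⟩ := exists_min_rel D.prec (Y \ X) hne
    (fun x hx y hy hne' => hG.prec_total (hmem x hx) (hmem y hy)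
      (hG.transv_rep_ne hY (Finset.mem_sdiff.1 hx).1 (Finset.mem_sdiff.1 hy).1 hne'))
    (fun x hx y hy z hz hxy hyz => by
      by_cases h : D.rep x = D.rep z
      · exact absurd ((hG.prec_congr_right h.symm).1 hyz)
          (hG.prec_asymm (hmem x hx) (hmem y hy) hxy)
      · exact hG.prec_trans (hmem x hx) (hmem y hy) (hmem z hz) hxy hyz h)
  exact ⟨b, hb, hmin⟩

theorem gamma_spec {X Y : Finset α} (hX : (levelSucc D).mem X) (hY : (levelSucc D).mem Y)
    (hXY : X ≠ Y) :
    gammaOf D X Y ∈ Y \ X ∧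
      ∀ b' ∈ Y \ X, b' = gammaOf D X Y ∨ D.prec (gammaOf D X Y) b' :=
  Classical.epsilon_spec (hG.gamma_exists hX hY hXY)

theorem gamma_eq {X Y : Finset α} (hX : (levelSucc D).mem X) (hY : (levelSucc D).mem Y)
    (hXY : X ≠ Y) {b : α}
    (hb : b ∈ Y \ X ∧ ∀ b' ∈ Y \ X, b' = b ∨ D.prec b b') : gammaOf D X Y = b := by
  obtain ⟨h1, h2⟩ := hG.gamma_spec hX hY hXY
  rcases hb.2 _ h1 with h | h
  · exact h
  · rcases h2 _ hb.1 with h' | h'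
    · exact h'.symm
    · exact absurd h' (hG.prec_asymm (hY.1 _ (Finset.mem_sdiff.1 hb.1).1)
        (hY.1 _ (Finset.mem_sdiff.1 h1).1) h)

theorem gamma_memY {X Y : Finset α} (hX : (levelSucc D).mem X) (hY : (levelSucc D).mem Y)
    (hXY : X ≠ Y) : gammaOf D X Y ∈ Y := (Finset.mem_sdiff.1 (hG.gamma_spec hX hY hXY).1).1

theorem gamma_not_memX {X Y : Finset α} (hX : (levelSucc D).mem X) (hY : (levelSucc D).mem Y)
    (hXY : X ≠ Y) : gammaOf D X Y ∉ X := (Finset.mem_sdiff.1 (hG.gamma_spec hX hY hXY).1).2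

theorem gamma_mem {X Y : Finset α} (hX : (levelSucc D).mem X) (hY : (levelSucc D).mem Y)
    (hXY : X ≠ Y) : D.mem (gammaOf D X Y) := hY.1 _ (hG.gamma_memY hX hY hXY)

theorem gamma_sigma {X Y : Finset α} (hX : (levelSucc D).mem X) (hY : (levelSucc D).mem Y)
    (hXY : X ≠ Y) : gammaOf D Y X = D.sigma (gammaOf D X Y) := by
  obtain ⟨hg, hmin⟩ := hG.gamma_spec hX hY hXY
  rw [Finset.mem_sdiff] at hg
  have hgm : D.mem (gammaOf D X Y) := hY.1 _ hg.1
  apply hG.gamma_eq hY hX (Ne.symm hXY)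
  constructor
  · rw [Finset.mem_sdiff]
    exact ⟨hG.transv_sigma_mem hX hgm hg.2, hG.transv_sigma_not_mem hY hgm hg.1⟩
  · intro b' hb'
    rw [Finset.mem_sdiff] at hb'
    have hb'm : D.mem b' := hX.1 _ hb'.1
    have hsb' : D.sigma b' ∈ Y \ X := Finset.mem_sdiff.2
      ⟨hG.transv_sigma_mem hY hb'm hb'.2, hG.transv_sigma_not_mem hX hb'm hb'.1⟩
    rcases hmin _ hsb' with h | h
    · left
      rw [← h, hG.sigsig _ hb'm]
    · right
      exact (hG.prec_congr_left (hG.rep_sigma hgm)).2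
        ((hG.prec_congr_right (hG.rep_sigma hb'm)).1 h)

theorem agree {X Y : Finset α} (hX : (levelSucc D).mem X) (hY : (levelSucc D).mem Y)
    (hXY : X ≠ Y) (hb : D.mem b) (hp : D.prec b (gammaOf D X Y)) : b ∈ X ↔ b ∈ Y := by
  obtain ⟨hg, hmin⟩ := hG.gamma_spec hX hY hXY
  have hgm : D.mem (gammaOf D X Y) := hY.1 _ (Finset.mem_sdiff.1 hg).1
  constructor
  · intro hbX
    by_contra hbY
    have h1 : D.sigma b ∈ Y := hG.transv_sigma_mem hY hb hbY
    have h2 : D.sigma b ∉ X := hG.transv_sigma_not_mem hX hb hbX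
    rcases hmin _ (Finset.mem_sdiff.2 ⟨h1, h2⟩) with h | h
    · exact hp.1 (by rw [← h, hG.rep_sigma hb])
    · exact hG.prec_asymm hb hgm hp ((hG.prec_congr_right (hG.rep_sigma hb)).1 h)
  · intro hbY
    by_contra hbX
    rcases hmin _ (Finset.mem_sdiff.2 ⟨hbY, hbX⟩) with h | h
    · exact hp.1 (by rw [h])
    · exact hG.prec_asymm hb hgm hp h

theorem master {X Y Z : Finset α} (hX : (levelSucc D).mem X) (hY : (levelSucc D).mem Y)
    (hZ : (levelSucc D).mem Z) (hXY : X ≠ Y) (hXZ : X ≠ Z) (hYZ : Y ≠ Z)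
    (h12 : gammaOf D X Y ≠ gammaOf D X Z) (h23 : gammaOf D X Z ≠ gammaOf D Y Z) :
    gammaOf D Y Z = D.sigma (gammaOf D X Y) ∧ D.prec (gammaOf D X Y) (gammaOf D X Z) := by
  obtain s1 := hG.gamma_spec hX hY hXY
  obtain s2 := hG.gamma_spec hX hZ hXZ
  obtain s3 := hG.gamma_spec hY hZ hYZ
  have hg1 := Finset.mem_sdiff.1 s1.1
  have hg2 := Finset.mem_sdiff.1 s2.1
  have hg3 := Finset.mem_sdiff.1 s3.1
  have m1 : D.mem (gammaOf D X Y) := hY.1 _ hg1.1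
  have m2 : D.mem (gammaOf D X Z) := hZ.1 _ hg2.1
  have m3 : D.mem (gammaOf D Y Z) := hZ.1 _ hg3.1
  have r12 : D.rep (gammaOf D X Y) ≠ D.rep (gammaOf D X Z) := by
    intro h
    have hh := hG.rep_cases m1 m2 h h12
    exact hg2.2 (hh ▸ hG.transv_sigma_mem hX m1 hg1.2)
  have r23 : D.rep (gammaOf D X Z) ≠ D.rep (gammaOf D Y Z) := by
    intro h
    have hh := hG.rep_cases m2 m3 h h23
    exact hG.transv_sigma_not_mem hZ m2 hg2.1 (hh ▸ hg3.1)
  have N1 : ¬ (D.prec (gammaOf D X Y) (gammaOf D X Z) ∧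
      D.prec (gammaOf D X Y) (gammaOf D Y Z)) := by
    rintro ⟨p1, p2⟩
    have e1 := hG.agree hX hZ hXZ m1 p1
    have e2 := hG.agree hY hZ hYZ m1 p2
    exact hg1.2 (e1.2 (e2.1 hg1.1))
  have N2 : ¬ (D.prec (gammaOf D X Z) (gammaOf D X Y) ∧
      D.prec (gammaOf D X Z) (gammaOf D Y Z)) := by
    rintro ⟨p1, p2⟩
    have e1 := hG.agree hX hY hXY m2 p1
    have e2 := hG.agree hY hZ hYZ m2 p2
    exact hg2.2 (e1.2 (e2.2 hg2.1))
  have N3 : ¬ (D.prec (gammaOf D Y Z) (gammaOf D X Y) ∧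
      D.prec (gammaOf D Y Z) (gammaOf D X Z)) := by
    rintro ⟨p1, p2⟩
    have e1 := hG.agree hX hY hXY m3 p1
    have e2 := hG.agree hX hZ hXZ m3 p2
    exact hg3.2 (e1.1 (e2.2 hg3.1))
  have p12 : D.prec (gammaOf D X Y) (gammaOf D X Z) := by
    rcases hG.prec_total m1 m2 r12 with h | h
    · exact h
    · exfalso
      have p32 : D.prec (gammaOf D Y Z) (gammaOf D X Z) := by
        rcases hG.prec_total m3 m2 (Ne.symm r23) with h' | h'
        · exact h'
        · exact absurd ⟨h, h'⟩ N2
      have r31 : D.rep (gammaOf D Y Z) ≠ D.rep (gammaOf D X Y) := by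
        intro hh
        exact hG.prec_asymm m2 m1 h ((hG.prec_congr_left hh).1 p32)
      exact N3 ⟨hG.prec_trans m3 m2 m1 p32 h r31, p32⟩
  have p32 : D.prec (gammaOf D Y Z) (gammaOf D X Z) := by
    rcases hG.prec_total m3 m2 (Ne.symm r23) with h | h
    · exact h
    · exfalso
      have r13 : D.rep (gammaOf D X Y) ≠ D.rep (gammaOf D Y Z) := by
        intro hh
        exact hG.prec_asymm m2 m3 h ((hG.prec_congr_left hh).1 p12)
      exact N1 ⟨p12, hG.prec_trans m1 m2 m3 p12 h r13⟩
  have r13 : D.rep (gammaOf D X Y) = D.rep (gammaOf D Y Z) := by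
    by_contra hh
    rcases hG.prec_total m1 m3 hh with h | h
    · exact N1 ⟨p12, h⟩
    · exact N3 ⟨h, p32⟩
  have h13 : gammaOf D X Y ≠ gammaOf D Y Z := by
    intro h
    exact hg3.2 (h ▸ hg1.1)
  exact ⟨hG.rep_cases m1 m3 r13 h13, p12⟩

end GoodLD

end Machinery2

section Machinery3

variable {α : Type} [DecidableEq α] [Nonempty α] {D : LevelData α} (hG : GoodLD D)

namespace GoodLD

set_option linter.unusedSectionVars false

include hG

theorem sigma'_mem_iff {X : Finset α} (hX : (levelSucc D).mem X) (ha : D.mem a) :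
    a ∈ X.image D.sigma ↔ a ∉ X := by
  constructor
  · rintro h
    obtain ⟨b, hb, hba⟩ := Finset.mem_image.1 h
    have hab : D.sigma a = b := by rw [← hba, hG.sigsig _ (hX.1 b hb)]
    intro haX
    exact hG.transv_sigma_not_mem hX ha haX (hab ▸ hb)
  · intro h
    exact Finset.mem_image.2 ⟨D.sigma a, hG.transv_sigma_mem hX ha h, hG.sigsig _ ha⟩

theorem memSucc_sigma {X : Finset α} (hX : (levelSucc D).mem X) :
    (levelSucc D).mem (X.image D.sigma) := by
  constructor
  · intro c hc
    obtain ⟨b, hb, hbc⟩ := Finset.mem_image.1 hc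
    exact hbc ▸ hG.memsig _ (hX.1 b hb)
  · intro a ha
    rw [hG.sigma'_mem_iff hX ha, hG.sigma'_mem_iff hX (hG.memsig _ ha)]
    have h := hX.2 a ha
    tauto

theorem sigma'_sigma' {X : Finset α} (hX : (levelSucc D).mem X) :
    (X.image D.sigma).image D.sigma = X := by
  apply Finset.ext; intro c
  constructor
  · intro hc
    obtain ⟨b, hb, hbc⟩ := Finset.mem_image.1 hc
    obtain ⟨a', ha', ha'b⟩ := Finset.mem_image.1 hb
    rw [← hbc, ← ha'b, hG.sigsig _ (hX.1 _ ha')]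
    exact ha'
  · intro hc
    exact Finset.mem_image.2 ⟨D.sigma c, Finset.mem_image.2 ⟨c, hc, rfl⟩,
      hG.sigsig _ (hX.1 _ hc)⟩

theorem theMin_spec : D.mem (theMin D) ∧ ∀ b, D.mem b → b ≠ theMin D → D.lt (theMin D) b :=
  Classical.epsilon_spec hG.minEx

theorem sigma_theMin_max : ∀ b, D.mem b → b ≠ D.sigma (theMin D) → D.lt b (D.sigma (theMin D)) := by
  obtain ⟨hm, hmin⟩ := hG.theMin_spec
  intro b hb hne
  have hσb : D.mem (D.sigma b) := hG.memsig _ hb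
  have h1 : D.sigma b ≠ theMin D := fun h => hne (by rw [← h, hG.sigsig _ hb])
  have h2 := hmin _ hσb h1
  have h3 := (hG.anti _ _ hm hσb).1 h2
  rwa [hG.sigsig _ hb] at h3

theorem maxEx : ∃ m, D.mem m ∧ ∀ b, D.mem b → b ≠ m → D.lt b m :=
  ⟨D.sigma (theMin D), hG.memsig _ hG.theMin_spec.1, hG.sigma_theMin_max⟩

theorem theMax_spec : D.mem (theMax D) ∧ ∀ b, D.mem b → b ≠ theMax D → D.lt b (theMax D) :=
  Classical.epsilon_spec hG.maxEx

theorem theMax_eq : theMax D = D.sigma (theMin D) := by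
  by_contra h
  have h1 := hG.sigma_theMin_max _ hG.theMax_spec.1 h
  have h2 := hG.theMax_spec.2 _ (hG.memsig _ hG.theMin_spec.1) (Ne.symm h)
  exact hG.asym _ _ hG.theMax_spec.1 (hG.memsig _ hG.theMin_spec.1) h h1 h2

theorem theMin_minus : D.memMinus (theMin D) := by
  rw [hG.minusIff _ hG.theMin_spec.1]
  exact hG.theMin_spec.2 _ (hG.memsig _ hG.theMin_spec.1) (hG.signe _ hG.theMin_spec.1)

theorem theMin_not_plus : ¬ D.memPlus (theMin D) := by
  intro h
  exact hG.not_minus_and_plus hG.theMin_spec.1 ⟨hG.theMin_minus, h⟩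

theorem sigma_theMin_plus : D.memPlus (D.sigma (theMin D)) := by
  rw [hG.plus_iff_minus_sigma (hG.memsig _ hG.theMin_spec.1), hG.sigsig _ hG.theMin_spec.1]
  exact hG.theMin_minus

theorem rep_theMin : D.rep (theMin D) = theMin D := by
  unfold LevelData.rep
  rw [if_pos hG.theMin_minus]

theorem prec_theMin (hb : D.mem b) (h : D.rep b ≠ theMin D) : D.prec (theMin D) b := by
  refine ⟨?_, ?_⟩
  · rw [hG.rep_theMin]; exact fun hh => h hh.symm
  · rw [hG.rep_theMin]
    exact hG.theMin_spec.2 _ (hG.mem_rep hb) (fun hh => h hh)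

theorem transv_nonempty {X : Finset α} (hX : (levelSucc D).mem X) : ∃ a, a ∈ X := by
  by_cases h : theMin D ∈ X
  · exact ⟨_, h⟩
  · exact ⟨_, hG.transv_sigma_mem hX hG.theMin_spec.1 h⟩

theorem sigma'_ne {X : Finset α} (hX : (levelSucc D).mem X) : X.image D.sigma ≠ X := by
  obtain ⟨a, ha⟩ := hG.transv_nonempty hX
  intro h
  exact (hG.sigma'_mem_iff hX (hX.1 a ha)).1 (h.symm ▸ ha) ha

theorem minusIff' {X : Finset α} (hX : (levelSucc D).mem X) :
    ((levelSucc D).memMinus X ↔ (levelSucc D).lt X ((levelSucc D).sigma X)) := by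
  have hmm := hG.theMin_spec
  have hXs : (levelSucc D).mem (X.image D.sigma) := hG.memSucc_sigma hX
  have hne : X ≠ X.image D.sigma := Ne.symm (hG.sigma'_ne hX)
  show theMin D ∈ X ↔ D.memPlus (gammaOf D X (X.image D.sigma))
  by_cases h : theMin D ∈ X
  · have hγ : gammaOf D X (X.image D.sigma) = D.sigma (theMin D) := by
      apply hG.gamma_eq hX hXs hne
      have h2 : D.sigma (theMin D) ∉ X := hG.transv_sigma_not_mem hX hmm.1 h
      constructor
      · rw [Finset.mem_sdiff, hG.sigma'_mem_iff hX (hG.memsig _ hmm.1)]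
        exact ⟨h2, h2⟩
      · intro b' hb'
        rw [Finset.mem_sdiff] at hb'
        have hb'm : D.mem b' := hXs.1 _ hb'.1
        by_cases hb'min : b' = D.sigma (theMin D)
        · exact Or.inl hb'min
        · right
          rw [hG.prec_congr_left (hG.rep_sigma hmm.1)]
          refine hG.prec_theMin hb'm ?_
          intro hh
          rcases hG.self_or_sigma_rep hb'm with h1 | h1
          · rw [hh] at h1; exact hb'.2 (h1 ▸ h)
          · rw [hh] at h1; exact hb'min h1
    rw [hγ]
    simp only [h, true_iff]
    exact hG.sigma_theMin_plus
  · have hγ : gammaOf D X (X.image D.sigma) = theMin D := by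
      apply hG.gamma_eq hX hXs hne
      constructor
      · rw [Finset.mem_sdiff, hG.sigma'_mem_iff hX hmm.1]
        exact ⟨h, h⟩
      · intro b' hb'
        rw [Finset.mem_sdiff] at hb'
        have hb'm : D.mem b' := hXs.1 _ hb'.1
        by_cases hb'min : b' = theMin D
        · exact Or.inl hb'min
        · right
          refine hG.prec_theMin hb'm ?_
          intro hh
          rcases hG.self_or_sigma_rep hb'm with h1 | h1
          · rw [hh] at h1; exact hb'min h1
          · rw [hh] at h1
            -- b' = σ Min, b' ∉ X,  so Min ∈ X? no: σ Min ∉ X → Min ∈ X (transv) contra h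
            have : D.sigma (theMin D) ∉ X := h1 ▸ hb'.2
            exact h (by
              by_contra hMin
              exact this (hG.transv_sigma_mem hX hmm.1 hMin))
    rw [hγ]
    simp only [h, false_iff]
    exact hG.theMin_not_plus

theorem plusIff' {X : Finset α} (hX : (levelSucc D).mem X) :
    ((levelSucc D).memPlus X ↔ (levelSucc D).lt ((levelSucc D).sigma X) X) := by
  have hmm := hG.theMin_spec
  have hXs : (levelSucc D).mem (X.image D.sigma) := hG.memSucc_sigma hX
  have hne : X.image D.sigma ≠ X := hG.sigma'_ne hX
  have hshow : (levelSucc D).memPlus X ↔ theMax D ∈ X := Iff.rfl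
  rw [hshow, hG.theMax_eq]
  show D.sigma (theMin D) ∈ X ↔ D.memPlus (gammaOf D (X.image D.sigma) X)
  by_cases h : theMin D ∈ X
  · have hγ : gammaOf D (X.image D.sigma) X = theMin D := by
      apply hG.gamma_eq hXs hX hne
      constructor
      · rw [Finset.mem_sdiff, hG.sigma'_mem_iff hX hmm.1]
        exact ⟨h, fun hh => hh h⟩
      · intro b' hb'
        rw [Finset.mem_sdiff] at hb'
        have hb'm : D.mem b' := hX.1 _ hb'.1
        by_cases hb'min : b' = theMin D
        · exact Or.inl hb'min
        · right
          refine hG.prec_theMin hb'm ?_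
          intro hh
          rcases hG.self_or_sigma_rep hb'm with h1 | h1
          · rw [hh] at h1; exact hb'min h1
          · rw [hh] at h1
            have : D.sigma (theMin D) ∈ X := h1 ▸ hb'.1
            exact hG.transv_sigma_not_mem hX hmm.1 h this
    rw [hγ]
    have hσ : D.sigma (theMin D) ∉ X := hG.transv_sigma_not_mem hX hmm.1 h
    simp only [hσ, false_iff]
    exact hG.theMin_not_plus
  · have hσ : D.sigma (theMin D) ∈ X := hG.transv_sigma_mem hX hmm.1 h
    have hγ : gammaOf D (X.image D.sigma) X = D.sigma (theMin D) := by
      apply hG.gamma_eq hXs hX hne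
      constructor
      · rw [Finset.mem_sdiff, hG.sigma'_mem_iff hX (hG.memsig _ hmm.1)]
        exact ⟨hσ, fun hh => hh hσ⟩
      · intro b' hb'
        rw [Finset.mem_sdiff] at hb'
        have hb'm : D.mem b' := hX.1 _ hb'.1
        by_cases hb'min : b' = D.sigma (theMin D)
        · exact Or.inl hb'min
        · right
          rw [hG.prec_congr_left (hG.rep_sigma hmm.1)]
          refine hG.prec_theMin hb'm ?_
          intro hh
          rcases hG.self_or_sigma_rep hb'm with h1 | h1
          · rw [hh] at h1; exact h (h1 ▸ hb'.1)
          · rw [hh] at h1; exact hb'min h1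
    rw [hγ]
    simp only [hσ, true_iff]
    exact hG.sigma_theMin_plus

theorem goodSucc : GoodLD (levelSucc D) where
  memsig := fun X hX => hG.memSucc_sigma hX
  sigsig := fun X hX => hG.sigma'_sigma' hX
  signe := fun X hX => hG.sigma'_ne hX
  tri := by
    intro X Y hX hY hne
    show D.memPlus (gammaOf D X Y) ∨ D.memPlus (gammaOf D Y X)
    rw [hG.gamma_sigma hX hY hne]
    have m1 : D.mem (gammaOf D X Y) := hG.gamma_mem hX hY hne
    rcases hG.minus_or_plus m1 with h | h
    · right
      exact (hG.plus_iff_minus_sigma (hG.memsig _ m1)).2 (by rw [hG.sigsig _ m1]; exact h)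
    · left; exact h
  asym := by
    intro X Y hX hY hne h1 h2
    have h2' : D.memPlus (D.sigma (gammaOf D X Y)) := by
      rw [← hG.gamma_sigma hX hY hne]
      exact h2
    have m1 : D.mem (gammaOf D X Y) := hG.gamma_mem hX hY hne
    have hmg : D.memMinus (gammaOf D X Y) := by
      have := (hG.plus_iff_minus_sigma m1).1 h1
      have h3 := (hG.plus_iff_minus_sigma (hG.memsig _ m1)).1 h2'
      rwa [hG.sigsig _ m1] at h3
    exact hG.not_minus_and_plus m1 ⟨hmg, h1⟩
  ltTrans := by
    intro X Y Z hX hY hZ hXZ h1 h2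
    by_cases hXY : X = Y
    · rw [hXY]; exact h2
    by_cases hYZ : Y = Z
    · rw [← hYZ]; exact h1
    by_cases h12 : gammaOf D X Y = gammaOf D X Z
    · show D.memPlus (gammaOf D X Z); rw [← h12]; exact h1
    by_cases h23 : gammaOf D X Z = gammaOf D Y Z
    · show D.memPlus (gammaOf D X Z); rw [h23]; exact h2
    exfalso
    obtain ⟨he, -⟩ := hG.master hX hY hZ hXY hXZ hYZ h12 h23
    have m1 : D.mem (gammaOf D X Y) := hG.gamma_mem hX hY hXY
    have h2' : D.memPlus (D.sigma (gammaOf D X Y)) := he ▸ h2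
    have hmg : D.memMinus (gammaOf D X Y) := by
      have h3 := (hG.plus_iff_minus_sigma (hG.memsig _ m1)).1 h2'
      rwa [hG.sigsig _ m1] at h3
    exact hG.not_minus_and_plus m1 ⟨hmg, h1⟩
  anti := by
    intro X Y hX hY
    have hset : (X.image D.sigma) \ (Y.image D.sigma) = Y \ X := by
      apply Finset.ext; intro c
      rw [Finset.mem_sdiff, Finset.mem_sdiff]
      constructor
      · rintro ⟨h1, h2⟩
        have hc : D.mem c := (hG.memSucc_sigma hX).1 _ h1
        rw [hG.sigma'_mem_iff hX hc] at h1
        rw [hG.sigma'_mem_iff hY hc] at h2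
        exact ⟨not_not.1 h2, h1⟩
      · rintro ⟨h1, h2⟩
        have hc := hY.1 _ h1
        rw [hG.sigma'_mem_iff hX hc, hG.sigma'_mem_iff hY hc]
        exact ⟨h2, not_not.2 h1⟩
    show D.memPlus (gammaOf D X Y) ↔ D.memPlus (gammaOf D (Y.image D.sigma) (X.image D.sigma))
    have hγ : gammaOf D (Y.image D.sigma) (X.image D.sigma) = gammaOf D X Y := by
      unfold gammaOf
      rw [hset]
    rw [hγ]
  minusIff := fun X hX => hG.minusIff' hX
  plusIff := fun X hX => hG.plusIff' hX
  minEx := by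
    obtain ⟨S, hS⟩ := hG.finset
    set Xmin : Finset α := S.filter (fun a => D.memMinus a) with hXmin
    have hmem : (levelSucc D).mem Xmin := by
      constructor
      · intro a ha
        exact (hS a).1 (Finset.mem_filter.1 ha).1
      · intro a ha
        have h1 : a ∈ Xmin ↔ D.memMinus a := by
          rw [hXmin, Finset.mem_filter]
          exact ⟨fun h => h.2, fun h => ⟨(hS a).2 ha, h⟩⟩
        have h2 : D.sigma a ∈ Xmin ↔ D.memMinus (D.sigma a) := by
          rw [hXmin, Finset.mem_filter]
          exact ⟨fun h => h.2, fun h => ⟨(hS _).2 (hG.memsig _ ha), h⟩⟩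
        rw [h1, h2, hG.minus_sigma ha]
        tauto
    refine ⟨Xmin, hmem, ?_⟩
    intro Y hY hne
    show D.memPlus (gammaOf D Xmin Y)
    have hg := hG.gamma_spec hmem hY (Ne.symm hne)
    have hgY := Finset.mem_sdiff.1 hg.1
    have hgm : D.mem (gammaOf D Xmin Y) := hY.1 _ hgY.1
    have hnm : ¬ D.memMinus (gammaOf D Xmin Y) := by
      intro h
      exact hgY.2 (Finset.mem_filter.2 ⟨(hS _).2 hgm, h⟩)
    rcases hG.minus_or_plus hgm with h | h
    · exact absurd h hnm
    · exact h
  finset := by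
    obtain ⟨S, hS⟩ := hG.finset
    refine ⟨S.powerset.filter (fun X => (levelSucc D).mem X), ?_⟩
    intro X
    rw [Finset.mem_filter, Finset.mem_powerset]
    constructor
    · exact fun h => h.2
    · intro h
      exact ⟨fun a ha => (hS a).2 (h.1 a ha), h⟩

end GoodLD

end Machinery3

section Level2

theorem level2_mem_iff (n : ℕ) (p : ℕ × ℕ) :
    (level2 n).mem p ↔ (p.1 + p.2 = 2 * n + 1 ∧ 1 ≤ p.1 ∧ p.1 ≤ 2 * n) := by
  obtain ⟨a, b⟩ := p
  show (∃ i, 1 ≤ i ∧ i ≤ n ∧ ((a, b) = (2 * n - i + 1, i) ∨ (a, b) = (i, 2 * n - i + 1))) ↔ _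
  simp only [Prod.mk.injEq]
  constructor
  · rintro ⟨i, h1, h2, (⟨ha, hb⟩ | ⟨ha, hb⟩)⟩ <;> (subst ha; subst hb; omega)
  · rintro ⟨hs, h1, h2⟩
    by_cases hp : a ≤ n
    · exact ⟨a, by omega, hp, Or.inr ⟨rfl, by omega⟩⟩
    · exact ⟨b, by omega, by omega, Or.inl ⟨by omega, rfl⟩⟩

theorem level2_minus_iff (n : ℕ) (p : ℕ × ℕ) :
    (level2 n).memMinus p ↔ (p.1 + p.2 = 2 * n + 1 ∧ n + 1 ≤ p.1 ∧ p.1 ≤ 2 * n) := by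
  obtain ⟨a, b⟩ := p
  show (∃ i, 1 ≤ i ∧ i ≤ n ∧ (a, b) = (2 * n - i + 1, i)) ↔ _
  simp only [Prod.mk.injEq]
  constructor
  · rintro ⟨i, h1, h2, ha, hb⟩
    subst ha; subst hb; omega
  · rintro ⟨hs, h1, h2⟩
    exact ⟨b, by omega, by omega, by omega, rfl⟩

theorem level2_plus_iff (n : ℕ) (p : ℕ × ℕ) :
    (level2 n).memPlus p ↔ (p.1 + p.2 = 2 * n + 1 ∧ 1 ≤ p.1 ∧ p.1 ≤ n) := by
  obtain ⟨a, b⟩ := p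
  show (∃ i, 1 ≤ i ∧ i ≤ n ∧ (a, b) = (i, 2 * n - i + 1)) ↔ _
  simp only [Prod.mk.injEq]
  constructor
  · rintro ⟨i, h1, h2, ha, hb⟩
    subst ha; subst hb; omega
  · rintro ⟨hs, h1, h2⟩
    exact ⟨a, by omega, by omega, rfl, by omega⟩

theorem level2_sigma (n : ℕ) (p : ℕ × ℕ) : (level2 n).sigma p = (p.2, p.1) := rfl

theorem level2_lt (n : ℕ) (p q : ℕ × ℕ) : (level2 n).lt p q ↔ q.1 < p.1 := Iff.rfl

theorem prod_ext' (p : ℕ × ℕ) (a b : ℕ) (h1 : p.1 = a) (h2 : p.2 = b) : p = (a, b) := by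
  obtain ⟨x, y⟩ := p
  simp only [Prod.mk.injEq]
  exact ⟨h1, h2⟩

theorem good2 (n : ℕ) (hn : 1 ≤ n) : GoodLD (level2 n) where
  memsig := by
    intro a ha
    rw [level2_mem_iff n a] at ha
    rw [level2_sigma n a, level2_mem_iff n (Prod.snd a, Prod.fst a)]
    omega
  sigsig := by
    intro a _
    rw [level2_sigma n a, level2_sigma n (Prod.snd a, Prod.fst a)]
    rfl
  signe := by
    intro a ha h
    rw [level2_mem_iff n a] at ha
    rw [level2_sigma n a] at h
    have h2 := congrArg Prod.fst h
    omega
  tri := by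
    intro a b ha hb hne
    rw [level2_mem_iff n a] at ha; rw [level2_mem_iff n b] at hb
    rw [level2_lt n a b, level2_lt n b a]
    rcases Nat.lt_trichotomy (Prod.fst a) (Prod.fst b) with h | h | h
    · right; exact h
    · exfalso
      apply hne
      have hb2 : Prod.snd a = Prod.snd b := by omega
      have := prod_ext' a (Prod.fst b) (Prod.snd b) h hb2
      rw [this]
      exact (prod_ext' b (Prod.fst b) (Prod.snd b) rfl rfl).symm ▸ rfl
    · left; exact h
  asym := by
    intro a b _ _ _ h1 h2
    rw [level2_lt n a b] at h1; rw [level2_lt n b a] at h2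
    omega
  ltTrans := by
    intro a b c _ _ _ _ h1 h2
    rw [level2_lt n a b] at h1; rw [level2_lt n b c] at h2; rw [level2_lt n a c]
    omega
  anti := by
    intro a b ha hb
    rw [level2_mem_iff n a] at ha; rw [level2_mem_iff n b] at hb
    rw [level2_lt n a b, level2_lt n ((level2 n).sigma b) ((level2 n).sigma a), level2_sigma n a, level2_sigma n b]
    constructor
    · intro h; omega
    · intro h; omega
  minusIff := by
    intro a ha
    rw [level2_mem_iff n a] at ha
    rw [level2_minus_iff n a, level2_lt n a ((level2 n).sigma a), level2_sigma n a]
    omega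
  plusIff := by
    intro a ha
    rw [level2_mem_iff n a] at ha
    rw [level2_plus_iff n a, level2_lt n ((level2 n).sigma a) a, level2_sigma n a]
    omega
  minEx := by
    refine ⟨((2 * n, 1) : ℕ × ℕ), ?_, ?_⟩
    · rw [level2_mem_iff]; omega
    · intro b hb hne
      rw [level2_mem_iff n b] at hb
      rw [level2_lt n (2 * n, 1) b]
      rcases Nat.lt_or_ge (Prod.fst b) (2 * n) with h | h
      · exact h
      · exfalso
        apply hne
        exact prod_ext' b (2 * n) 1 (by omega) (by omega)
  finset := by
    refine ⟨((Finset.range (2 * n + 1)) ×ˢ (Finset.range (2 * n + 2))).filter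
      (fun p => (level2 n).mem p), ?_⟩
    intro a
    erw [Finset.mem_filter, Finset.mem_product, Finset.mem_range, Finset.mem_range]
    constructor
    · exact fun h => h.2
    · intro h
      refine ⟨?_, h⟩
      rw [level2_mem_iff n a] at h
      omega

theorem goodL (n : ℕ) (hn : 1 ≤ n) : ∀ j : ℕ, GoodLD (L n (j + 2))
  | 0 => good2 n hn
  | (j + 1) => (goodL n hn j).goodSucc

end Level2

/-- For pairwise distinct `A, B, C ∈ F_r(n)` (written `r = k + 2` so that `r ≥ 2`), the
sequence `(γ(A,B), γ(A,C), γ(B,C))` is monotone in `≤_{r-1}`: it is nondecreasing or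
nonincreasing. -/
theorem gamma_three_term_monotone (n : ℕ) (hn : 1 ≤ n) (k : ℕ) (A B C : FT (k + 2))
    (hA : memF n (k + 2) A) (hB : memF n (k + 2) B) (hC : memF n (k + 2) C)
    (hAB : A ≠ B) (hAC : A ≠ C) (hBC : B ≠ C) :
    (leF n (k + 1) (gam n k A B) (gam n k A C) ∧
      leF n (k + 1) (gam n k A C) (gam n k B C)) ∨
    (leF n (k + 1) (gam n k B C) (gam n k A C) ∧
      leF n (k + 1) (gam n k A C) (gam n k A B)) := by
  cases k with
  | zero =>
    have hle : ∀ x y : Bool, x = false ∨ y = true → leF n 1 x y := by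
      rintro x y (rfl | rfl)
      · cases y
        · exact Or.inr rfl
        · exact Or.inl ⟨rfl, rfl⟩
      · cases x
        · exact Or.inl ⟨rfl, rfl⟩
        · exact Or.inr rfl
    by_cases hy : Prod.fst C < Prod.fst A
    · by_cases hz : Prod.fst C < Prod.fst B
      · left
        constructor
        · apply hle; right; exact decide_eq_true hy
        · apply hle; right; exact decide_eq_true hz
      · right
        constructor
        · apply hle; left; exact decide_eq_false hz
        · apply hle; right; exact decide_eq_true (show Prod.fst B < Prod.fst A by omega)
    · by_cases hx : Prod.fst B < Prod.fst A
      · right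
        constructor
        · apply hle; left; exact decide_eq_false (show ¬ Prod.fst C < Prod.fst B by omega)
        · apply hle; right; exact decide_eq_true hx
      · left
        constructor
        · apply hle; left; exact decide_eq_false hx
        · apply hle; left; exact decide_eq_false hy
  | succ j =>
    have hG : GoodLD (L n (j + 2)) := goodL n hn j
    have hA' : (levelSucc (L n (j + 2))).mem A := hA
    have hB' : (levelSucc (L n (j + 2))).mem B := hB
    have hC' : (levelSucc (L n (j + 2))).mem C := hC
    have e1 : gam n (j + 1) A B = gammaOf (L n (j + 2)) A B := rfl
    have e2 : gam n (j + 1) A C = gammaOf (L n (j + 2)) A C := rfl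
    have e3 : gam n (j + 1) B C = gammaOf (L n (j + 2)) B C := rfl
    have hle : ∀ x y : FT (j + 2), ((L n (j + 2)).lt x y ∨ x = y) → leF n (j + 2) x y :=
      fun _ _ h => h
    rw [e1, e2, e3]
    by_cases h12 : gammaOf (L n (j + 2)) A B = gammaOf (L n (j + 2)) A C
    · by_cases h23 : gammaOf (L n (j + 2)) A C = gammaOf (L n (j + 2)) B C
      · exact Or.inl ⟨hle _ _ (Or.inr h12), hle _ _ (Or.inr h23)⟩
      · rcases hG.tri _ _ (hG.gamma_mem hA' hC' hAC) (hG.gamma_mem hB' hC' hBC) h23 with h | h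
        · exact Or.inl ⟨hle _ _ (Or.inr h12), hle _ _ (Or.inl h)⟩
        · exact Or.inr ⟨hle _ _ (Or.inl h), hle _ _ (Or.inr h12.symm)⟩
    · by_cases h23 : gammaOf (L n (j + 2)) A C = gammaOf (L n (j + 2)) B C
      · rcases hG.tri _ _ (hG.gamma_mem hA' hB' hAB) (hG.gamma_mem hA' hC' hAC) h12 with h | h
        · exact Or.inl ⟨hle _ _ (Or.inl h), hle _ _ (Or.inr h23)⟩
        · exact Or.inr ⟨hle _ _ (Or.inr h23.symm), hle _ _ (Or.inl h)⟩
      · obtain ⟨he, hp⟩ := hG.master hA' hB' hC' hAB hAC hBC h12 h23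
        have m1 := hG.gamma_mem hA' hB' hAB
        have m2 := hG.gamma_mem hA' hC' hAC
        rcases hG.between m1 m2 hp with ⟨ha1, hb1⟩ | ⟨ha1, hb1⟩
        · refine Or.inl ⟨hle _ _ (Or.inl ha1), hle _ _ (Or.inl ?_)⟩
          rw [he]; exact hb1
        · refine Or.inr ⟨hle _ _ (Or.inl ?_), hle _ _ (Or.inl hb1)⟩
          rw [he]; exact ha1
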